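/- Let F : 2^Ω → ℝ be normalized, monotone, and submodular, and let f̃ be its partition multilinear extension. Then for all x, y in the categorical face 𝓕 = {x ∈ [0,1]^Ω : Σ_{e ∈ Ω_i} x_e = 1 for all i ∈ N}, the restricted DR first-order gap inequality holds: (1/2)·f̃(y) − f̃(x) ≤ (1/2)·Σ_{e ∈ Ω} ∂f̃/∂x_e(x) · (y_e − x_e). -/

import Mathlib

open Finset
open scoped Classical

/-- Feasibility in the partition matroid: at most one element per block. -/
def feasible {N Ω : Type*} [Fintype N] [Fintype Ω] (blk : Ω → N) (A : Finset Ω) : Prop :=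
  ∀ i : N, (A.filter (fun e => blk e = i)).card ≤ 1

/-- Per-agent probability factor `p_i(A; x)`. -/
noncomputable def blockProb {N Ω : Type*} [Fintype N] [Fintype Ω] (blk : Ω → N) (x : Ω → ℝ)
    (A : Finset Ω) (i : N) : ℝ :=
  if A.filter (fun e => blk e = i) = ∅ then
    1 - ∑ e ∈ Finset.univ.filter (fun e => blk e = i), x e
  else ∑ e ∈ A.filter (fun e => blk e = i), x e

/-- The partition multilinear extension. -/
noncomputable def pme {N Ω : Type*} [Fintype N] [Fintype Ω] (blk : Ω → N) (F : Finset Ω → ℝ)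
    (x : Ω → ℝ) : ℝ :=
  ∑ A ∈ Finset.univ.filter (fun A => feasible blk A), F A * ∏ i : N, blockProb blk x A i

/-- Partial derivative of `f` in coordinate `e` at `x`. -/
noncomputable def pderiv {Ω : Type*} (f : (Ω → ℝ) → ℝ) (e : Ω) (x : Ω → ℝ) : ℝ :=
  deriv (fun t : ℝ => f (Function.update x e t)) (x e)

/-- Membership in the partition matroid polytope `P`. -/
def memPolytope {N Ω : Type*} [Fintype N] [Fintype Ω] (blk : Ω → N) (x : Ω → ℝ) : Prop :=
  (∀ e, 0 ≤ x e ∧ x e ≤ 1) ∧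
    ∀ i : N, ∑ e ∈ Finset.univ.filter (fun e => blk e = i), x e ≤ 1

/-- Membership in the categorical face `𝓕` of the partition matroid polytope. -/
def memFace {N Ω : Type*} [Fintype N] [Fintype Ω] (blk : Ω → N) (x : Ω → ℝ) : Prop :=
  (∀ e, 0 ≤ x e ∧ x e ≤ 1) ∧
    ∀ i : N, ∑ e ∈ Finset.univ.filter (fun e => blk e = i), x e = 1

/-- Submodularity of a set function. -/
def Submodular {Ω : Type*} [Fintype Ω] (F : Finset Ω → ℝ) : Prop :=
  ∀ A B : Finset Ω, A ⊆ B → ∀ e ∉ B, F (insert e B) - F B ≤ F (insert e A) - F A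

set_option linter.unusedSectionVars false

section Aux

variable {N Ω : Type*} [Fintype N] [Fintype Ω]

/-- Full sections of the partition: one element from each block. -/
abbrev Sect (blk : Ω → N) := ∀ i : N, {e : Ω // blk e = i}

/-- Partial sections: one element from each block except block `i`. -/
abbrev PSect (blk : Ω → N) (i : N) := ∀ j : {j : N // j ≠ i}, {e : Ω // blk e = (j : N)}

variable (blk : Ω → N)

noncomputable def simg (s : Sect blk) : Finset Ω := univ.image fun i => (s i : Ω)

noncomputable def pimg {i : N} (r : PSect blk i) : Finset Ω := univ.image fun j => (r j : Ω)

noncomputable def wgt (z : Ω → ℝ) (s : Sect blk) : ℝ := ∏ i, z (s i : Ω)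

noncomputable def wp (z : Ω → ℝ) {i : N} (r : PSect blk i) : ℝ := ∏ j, z (r j : Ω)

noncomputable def spl (i : N) :
    Sect blk ≃ {e : Ω // blk e = i} × PSect blk i :=
  Equiv.piSplitAt i fun j => {e : Ω // blk e = j}

lemma spl_symm_same (i : N) (a : {e : Ω // blk e = i}) (r : PSect blk i) :
    ((spl blk i).symm (a, r)) i = a := by
  simp [spl, Equiv.piSplitAt]

lemma spl_symm_ne (i : N) (a : {e : Ω // blk e = i}) (r : PSect blk i)
    (j : N) (hj : j ≠ i) : ((spl blk i).symm (a, r)) j = r ⟨j, hj⟩ := by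
  simp [spl, Equiv.piSplitAt, hj]

lemma simg_filter (s : Sect blk) (i : N) :
    (simg blk s).filter (fun e => blk e = i) = {(s i : Ω)} := by
  ext a
  simp only [simg, mem_filter, mem_image, mem_univ, true_and, mem_singleton]
  constructor
  · rintro ⟨⟨j, rfl⟩, h⟩
    have hj : j = i := ((s j).2.symm.trans h)
    subst hj; rfl
  · rintro rfl
    exact ⟨⟨i, rfl⟩, (s i).2⟩

lemma mem_simg (s : Sect blk) (i : N) : (s i : Ω) ∈ simg blk s :=
  mem_image.2 ⟨i, mem_univ i, rfl⟩

lemma feasible_simg (s : Sect blk) : feasible blk (simg blk s) := by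
  intro i; rw [simg_filter]; simp

lemma blockProb_simg (x : Ω → ℝ) (s : Sect blk) (i : N) :
    blockProb blk x (simg blk s) i = x (s i : Ω) := by
  rw [blockProb, simg_filter]
  simp

lemma simg_injective : Function.Injective (simg blk) := by
  intro s s' h
  funext i
  have h2 := congrArg (fun A => A.filter (fun e => blk e = i)) h
  simp only [simg_filter] at h2
  exact Subtype.ext (Finset.singleton_inj.1 h2)

lemma pimg_filter_ne {i : N} (r : PSect blk i) (j : {j : N // j ≠ i}) :
    (pimg blk r).filter (fun e => blk e = (j : N)) = {(r j : Ω)} := by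
  ext a
  simp only [pimg, mem_filter, mem_image, mem_univ, true_and, mem_singleton]
  constructor
  · rintro ⟨⟨j', rfl⟩, h⟩
    have hj : j' = j := Subtype.ext ((r j').2.symm.trans h)
    subst hj; rfl
  · rintro rfl
    exact ⟨⟨j, rfl⟩, (r j).2⟩

lemma pimg_filter_self {i : N} (r : PSect blk i) :
    (pimg blk r).filter (fun e => blk e = i) = ∅ := by
  ext a
  simp only [pimg, mem_filter, mem_image, mem_univ, true_and, Finset.notMem_empty, iff_false,
    not_and]
  rintro ⟨j, rfl⟩ h
  exact j.2 ((r j).2.symm.trans h)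

lemma not_mem_pimg {i : N} (r : PSect blk i) {e : Ω} (he : blk e = i) :
    e ∉ pimg blk r := by
  intro hmem
  have : e ∈ (pimg blk r).filter (fun a => blk a = i) := mem_filter.2 ⟨hmem, he⟩
  rw [pimg_filter_self] at this
  exact absurd this (Finset.notMem_empty e)

lemma feasible_pimg {i : N} (r : PSect blk i) : feasible blk (pimg blk r) := by
  intro j
  by_cases hj : j = i
  · subst hj; rw [pimg_filter_self]; simp
  · rw [pimg_filter_ne blk r ⟨j, hj⟩]; simp

lemma insert_filter_ne {i : N} {e : Ω} (he : blk e = i) (A : Finset Ω) {j : N} (hj : j ≠ i) :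
    (insert e A).filter (fun a => blk a = j) = A.filter (fun a => blk a = j) := by
  rw [Finset.filter_insert, if_neg]
  rw [he]; exact fun h => hj h.symm

lemma feasible_insert_pimg {i : N} {e : Ω} (he : blk e = i) (r : PSect blk i) :
    feasible blk (insert e (pimg blk r)) := by
  intro j
  by_cases hj : j = i
  · subst hj
    rw [Finset.filter_insert, if_pos he, pimg_filter_self]
    simp
  · rw [insert_filter_ne blk he _ hj]
    exact feasible_pimg blk r j

lemma blockProb_pimg (x : Ω → ℝ) {i : N} (r : PSect blk i) (j : {j : N // j ≠ i}) :
    blockProb blk x (pimg blk r) (j : N) = x (r j : Ω) := by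
  rw [blockProb, pimg_filter_ne]
  simp

lemma blockProb_insert_pimg (x : Ω → ℝ) {i : N} {e : Ω} (he : blk e = i) (r : PSect blk i)
    (j : {j : N // j ≠ i}) :
    blockProb blk x (insert e (pimg blk r)) (j : N) = x (r j : Ω) := by
  have h : blockProb blk x (insert e (pimg blk r)) (j : N)
      = blockProb blk x (pimg blk r) (j : N) := by
    simp only [blockProb, insert_filter_ne blk he _ j.2]
  rw [h, blockProb_pimg]

lemma pimg_injective {i : N} : Function.Injective (fun r : PSect blk i => pimg blk r) := by
  intro r r' h
  funext j
  have h2 := congrArg (fun A => A.filter (fun e => blk e = (j : N))) h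
  simp only [pimg_filter_ne] at h2
  exact Subtype.ext (Finset.singleton_inj.1 h2)

lemma face_sum_subtype {z : Ω → ℝ} (hz : memFace blk z) (i : N) :
    ∑ a : {e : Ω // blk e = i}, z (a : Ω) = 1 := by
  rw [← hz.2 i]
  exact (Finset.sum_subtype _ (by simp) _).symm

lemma wgt_sum_one {z : Ω → ℝ} (hz : memFace blk z) :
    ∑ s : Sect blk, wgt blk z s = 1 := by
  have h : ∑ s : Sect blk, wgt blk z s = ∏ i : N, ∑ a : {e : Ω // blk e = i}, z (a : Ω) :=
    (Fintype.prod_sum fun i (a : {e : Ω // blk e = i}) => z (a : Ω)).symm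
  rw [h]
  exact Finset.prod_eq_one fun i _ => face_sum_subtype blk hz i

lemma wp_sum_one {z : Ω → ℝ} (hz : memFace blk z) (i : N) :
    ∑ r : PSect blk i, wp blk z r = 1 := by
  have h : ∑ r : PSect blk i, wp blk z r
      = ∏ j : {j : N // j ≠ i}, ∑ a : {e : Ω // blk e = (j : N)}, z (a : Ω) :=
    (Fintype.prod_sum fun (j : {j : N // j ≠ i}) (a : {e : Ω // blk e = (j : N)}) =>
      z (a : Ω)).symm
  rw [h]
  exact Finset.prod_eq_one fun j _ => face_sum_subtype blk hz (j : N)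

lemma sum_sect_split (i : N) (f : Sect blk → ℝ) :
    ∑ s : Sect blk, f s =
      ∑ a : {e : Ω // blk e = i}, ∑ r : PSect blk i, f ((spl blk i).symm (a, r)) := by
  rw [← Equiv.sum_comp (spl blk i).symm f, Fintype.sum_prod_type]

lemma wgt_split (z : Ω → ℝ) (i : N) (a : {e : Ω // blk e = i}) (r : PSect blk i) :
    wgt blk z ((spl blk i).symm (a, r)) = z (a : Ω) * wp blk z r := by
  rw [wgt, ← Finset.mul_prod_erase univ _ (mem_univ i), spl_symm_same]
  congr 1
  rw [Finset.prod_subtype (univ.erase i) (p := fun j => j ≠ i) (by simp)]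
  apply Finset.prod_congr rfl
  intro j _
  rw [spl_symm_ne blk i a r (j : N) j.2]

lemma simg_split (i : N) (a : {e : Ω // blk e = i}) (r : PSect blk i) :
    simg blk ((spl blk i).symm (a, r)) = insert (a : Ω) (pimg blk r) := by
  ext b
  simp only [simg, pimg, mem_image, mem_univ, true_and, mem_insert]
  constructor
  · rintro ⟨j, rfl⟩
    by_cases hj : j = i
    · subst hj; left; rw [spl_symm_same]
    · right; exact ⟨⟨j, hj⟩, by rw [spl_symm_ne blk i a r j hj]⟩
  · rintro (rfl | ⟨j, rfl⟩)
    · exact ⟨i, by rw [spl_symm_same]⟩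
    · exact ⟨(j : N), by rw [spl_symm_ne blk i a r (j : N) j.2]⟩

lemma erase_simg_split (i : N) (a : {e : Ω // blk e = i}) (r : PSect blk i) :
    (simg blk ((spl blk i).symm (a, r))).erase ((((spl blk i).symm (a, r)) i : Ω))
      = pimg blk r := by
  rw [simg_split blk i a r, spl_symm_same blk i a r]
  exact Finset.erase_insert (not_mem_pimg blk r a.2)

lemma pme_face (F : Finset Ω → ℝ) {x : Ω → ℝ} (hx : memFace blk x) :
    pme blk F x = ∑ s : Sect blk, F (simg blk s) * wgt blk x s := by
  have hinj : ∀ s ∈ (univ : Finset (Sect blk)), ∀ s' ∈ univ, simg blk s = simg blk s' → s = s' :=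
    fun s _ s' _ h => simg_injective blk h
  have hsubset : (univ : Finset (Sect blk)).image (simg blk)
      ⊆ univ.filter (fun A => feasible blk A) := by
    intro A hA
    rw [mem_image] at hA
    obtain ⟨s, _, rfl⟩ := hA
    exact mem_filter.2 ⟨mem_univ _, feasible_simg blk s⟩
  have hzero : ∀ A ∈ univ.filter (fun A => feasible blk A),
      A ∉ (univ : Finset (Sect blk)).image (simg blk) →
      F A * ∏ i : N, blockProb blk x A i = 0 := by
    intro A hA hnot
    have hfeas : feasible blk A := (mem_filter.1 hA).2
    by_cases hne : ∀ i : N, (A.filter (fun e => blk e = i)).Nonempty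
    · exfalso
      apply hnot
      set s : Sect blk := fun i => ⟨(hne i).choose, (mem_filter.1 (hne i).choose_spec).2⟩ with hs
      have hmem : ∀ i, (s i : Ω) ∈ A := fun i => (mem_filter.1 (hne i).choose_spec).1
      have hA' : A = simg blk s := by
        apply Finset.Subset.antisymm
        · intro a ha
          have h1 : a ∈ A.filter (fun e => blk e = blk a) := mem_filter.2 ⟨ha, rfl⟩
          have h2 : (s (blk a) : Ω) ∈ A.filter (fun e => blk e = blk a) :=
            mem_filter.2 ⟨hmem _, (s (blk a)).2⟩
          have h3 := Finset.card_le_one.1 (hfeas (blk a)) a h1 _ h2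
          rw [h3]; exact mem_simg blk s (blk a)
        · intro a ha
          rw [simg, mem_image] at ha
          obtain ⟨i, _, rfl⟩ := ha
          exact hmem i
      rw [hA', mem_image]
      exact ⟨s, mem_univ s, rfl⟩
    · push_neg at hne
      obtain ⟨i, hi⟩ := hne
      have h0 : blockProb blk x A i = 0 := by
        rw [blockProb, if_pos hi, hx.2 i]; ring
      rw [Finset.prod_eq_zero (mem_univ i) h0, mul_zero]
  rw [pme, ← Finset.sum_subset hsubset hzero, Finset.sum_image hinj]
  apply Finset.sum_congr rfl
  intro s _
  congr 1
  rw [wgt]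
  exact Finset.prod_congr rfl fun i _ => blockProb_simg blk x s i

/-- Slope of the PME in coordinate `e` (with `blk e = i`), as a function of the feasible set. -/
noncomputable def slp (i : N) (e : Ω) (A : Finset Ω) : ℝ :=
  if e ∈ A then 1 else if A.filter (fun a => blk a = i) = ∅ then -1 else 0

/-- Product of all block factors except block `i`. -/
noncomputable def pfac (x : Ω → ℝ) (i : N) (A : Finset Ω) : ℝ :=
  ∏ j ∈ univ.erase i, blockProb blk x A j

lemma blockProb_update_ne (x : Ω → ℝ) {i : N} {e : Ω} (he : blk e = i) (t : ℝ) (A : Finset Ω)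
    {j : N} (hj : j ≠ i) :
    blockProb blk (Function.update x e t) A j = blockProb blk x A j := by
  have hupd : ∀ S : Finset Ω, (∀ a ∈ S, blk a = j) →
      ∑ a ∈ S, Function.update x e t a = ∑ a ∈ S, x a := by
    intro S hS
    apply Finset.sum_congr rfl
    intro a ha
    exact Function.update_of_ne (fun hae => hj (by rw [← hS a ha, hae, he])) _ _
  simp only [blockProb]
  split_ifs with h
  · rw [hupd _ fun a ha => (mem_filter.1 ha).2]
  · exact hupd _ fun a ha => (mem_filter.1 ha).2

lemma blockProb_update_self (x : Ω → ℝ) {i : N} {e : Ω} (he : blk e = i) (t : ℝ)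
    {A : Finset Ω} (hA : feasible blk A) :
    blockProb blk (Function.update x e t) A i =
      slp blk i e A * t + (blockProb blk x A i - slp blk i e A * x e) := by
  by_cases hmem : e ∈ A
  · have hfil : A.filter (fun a => blk a = i) = {e} := by
      refine (Finset.eq_of_subset_of_card_le ?_ ?_).symm
      · rw [Finset.singleton_subset_iff]; exact mem_filter.2 ⟨hmem, he⟩
      · rw [Finset.card_singleton]; exact hA i
    simp only [blockProb, slp, hfil, if_pos hmem, if_neg (Finset.singleton_ne_empty e),
      Finset.sum_singleton, Function.update_self]
    ring
  · by_cases hemp : A.filter (fun a => blk a = i) = ∅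
    · simp only [blockProb, slp, if_pos hemp, if_neg hmem]
      have hein : e ∈ univ.filter (fun a => blk a = i) := mem_filter.2 ⟨mem_univ e, he⟩
      rw [Finset.sum_update_of_mem hein]
      have h2 : ∑ a ∈ univ.filter (fun a => blk a = i) \ {e}, x a
          = ∑ a ∈ univ.filter (fun a => blk a = i), x a - x e := by
        rw [← Finset.erase_eq]
        have h3 := Finset.sum_erase_add (univ.filter (fun a => blk a = i)) x hein
        linarith
      rw [h2]
      ring
    · simp only [blockProb, slp, if_neg hemp, if_neg hmem]
      have h2 : ∑ a ∈ A.filter (fun a => blk a = i), Function.update x e t a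
          = ∑ a ∈ A.filter (fun a => blk a = i), x a := by
        apply Finset.sum_congr rfl
        intro a ha
        refine Function.update_of_ne (fun h => hmem ?_) _ _
        rw [← h]
        exact (mem_filter.1 ha).1
      rw [h2]
      ring

lemma pderiv_face (F : Finset Ω → ℝ) {x : Ω → ℝ} (hx : memFace blk x) {i : N} {e : Ω}
    (he : blk e = i) :
    pderiv (pme blk F) e x =
      ∑ r : PSect blk i, wp blk x r * (F (insert e (pimg blk r)) - F (pimg blk r)) := by
  have haff : (fun t : ℝ => pme blk F (Function.update x e t)) = fun t : ℝ =>
      (∑ A ∈ univ.filter (fun A => feasible blk A), F A * (slp blk i e A * pfac blk x i A)) * t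
        + ∑ A ∈ univ.filter (fun A => feasible blk A),
            F A * ((blockProb blk x A i - slp blk i e A * x e) * pfac blk x i A) := by
    funext t
    rw [pme]
    have hterm : ∀ A ∈ univ.filter (fun A => feasible blk A),
        F A * ∏ j : N, blockProb blk (Function.update x e t) A j
          = F A * (slp blk i e A * pfac blk x i A) * t
            + F A * ((blockProb blk x A i - slp blk i e A * x e) * pfac blk x i A) := by
      intro A hA
      have hfeas : feasible blk A := (mem_filter.1 hA).2
      rw [← Finset.mul_prod_erase univ _ (mem_univ i)]
      have h1 : ∏ j ∈ univ.erase i, blockProb blk (Function.update x e t) A j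
          = pfac blk x i A := by
        unfold pfac
        exact Finset.prod_congr rfl fun j hj =>
          blockProb_update_ne blk x he t A (Finset.mem_erase.1 hj).1
      rw [h1, blockProb_update_self blk x he t hfeas]
      ring
    calc ∑ A ∈ univ.filter (fun A => feasible blk A),
        F A * ∏ j : N, blockProb blk (Function.update x e t) A j
        = ∑ A ∈ univ.filter (fun A => feasible blk A),
            (F A * (slp blk i e A * pfac blk x i A) * t
              + F A * ((blockProb blk x A i - slp blk i e A * x e) * pfac blk x i A)) :=
          Finset.sum_congr rfl hterm
      _ = _ := by rw [Finset.sum_add_distrib, ← Finset.sum_mul]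
  rw [pderiv, haff]
  have hd : deriv (fun t : ℝ =>
      (∑ A ∈ univ.filter (fun A => feasible blk A), F A * (slp blk i e A * pfac blk x i A)) * t
        + ∑ A ∈ univ.filter (fun A => feasible blk A),
            F A * ((blockProb blk x A i - slp blk i e A * x e) * pfac blk x i A)) (x e)
      = ∑ A ∈ univ.filter (fun A => feasible blk A), F A * (slp blk i e A * pfac blk x i A) := by
    have h := (((hasDerivAt_id (x e)).const_mul
      (∑ A ∈ univ.filter (fun A => feasible blk A),
        F A * (slp blk i e A * pfac blk x i A))).add_const
      (∑ A ∈ univ.filter (fun A => feasible blk A),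
        F A * ((blockProb blk x A i - slp blk i e A * x e) * pfac blk x i A))).deriv
    simp only [id_eq, mul_one] at h
    exact h
  rw [hd]
  -- Step 2: identify the coefficient with the partial-section sum.
  have hinj1 : ∀ r ∈ (univ : Finset (PSect blk i)), ∀ r' ∈ univ,
      insert e (pimg blk r) = insert e (pimg blk r') → r = r' := by
    intro r _ r' _ h
    apply pimg_injective blk
    have h2 : (insert e (pimg blk r)).erase e = (insert e (pimg blk r')).erase e := by rw [h]
    rwa [Finset.erase_insert (not_mem_pimg blk r he),
      Finset.erase_insert (not_mem_pimg blk r' he)] at h2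
  have hinj2 : ∀ r ∈ (univ : Finset (PSect blk i)), ∀ r' ∈ univ,
      pimg blk r = pimg blk r' → r = r' := fun r _ r' _ h => pimg_injective blk h
  have hdisj : Disjoint ((univ : Finset (PSect blk i)).image (fun r => insert e (pimg blk r)))
      ((univ : Finset (PSect blk i)).image (fun r => pimg blk r)) := by
    rw [Finset.disjoint_left]
    intro A hA1 hA2
    obtain ⟨r, _, rfl⟩ := mem_image.1 hA1
    obtain ⟨r', _, h⟩ := mem_image.1 hA2
    apply not_mem_pimg blk r' he
    rw [h]
    exact mem_insert_self e (pimg blk r)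
  have hsubset : ((univ : Finset (PSect blk i)).image (fun r => insert e (pimg blk r)))
      ∪ ((univ : Finset (PSect blk i)).image (fun r => pimg blk r))
      ⊆ univ.filter (fun A => feasible blk A) := by
    intro A hA
    rcases Finset.mem_union.1 hA with h | h
    · obtain ⟨r, _, rfl⟩ := mem_image.1 h
      exact mem_filter.2 ⟨mem_univ _, feasible_insert_pimg blk he r⟩
    · obtain ⟨r, _, rfl⟩ := mem_image.1 h
      exact mem_filter.2 ⟨mem_univ _, feasible_pimg blk r⟩
  have hzero : ∀ A ∈ univ.filter (fun A => feasible blk A),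
      A ∉ ((univ : Finset (PSect blk i)).image (fun r => insert e (pimg blk r)))
        ∪ ((univ : Finset (PSect blk i)).image (fun r => pimg blk r)) →
      F A * (slp blk i e A * pfac blk x i A) = 0 := by
    intro A hA hnot
    have hfeas : feasible blk A := (mem_filter.1 hA).2
    by_cases hcov : ∀ j : {j : N // j ≠ i}, (A.filter (fun a => blk a = (j : N))).Nonempty
    · set r : PSect blk i := fun j => ⟨(hcov j).choose, (mem_filter.1 (hcov j).choose_spec).2⟩
        with hr
      have hmem : ∀ j, (r j : Ω) ∈ A := fun j => (mem_filter.1 (hcov j).choose_spec).1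
      have hother : ∀ a ∈ A, blk a ≠ i → a ∈ pimg blk r := by
        intro a ha hai
        have h1 : a ∈ A.filter (fun b => blk b = blk a) := mem_filter.2 ⟨ha, rfl⟩
        have h2 : (r ⟨blk a, hai⟩ : Ω) ∈ A.filter (fun b => blk b = blk a) :=
          mem_filter.2 ⟨hmem _, (r ⟨blk a, hai⟩).2⟩
        have h3 := Finset.card_le_one.1 (hfeas (blk a)) a h1 _ h2
        rw [h3, pimg, mem_image]
        exact ⟨⟨blk a, hai⟩, mem_univ _, rfl⟩
      by_cases hmemE : e ∈ A
      · exfalso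
        apply hnot
        apply Finset.mem_union_left
        rw [mem_image]
        refine ⟨r, mem_univ r, ?_⟩
        apply Finset.Subset.antisymm
        · intro a ha
          rcases mem_insert.1 ha with rfl | hmem'
          · exact hmemE
          · obtain ⟨j, _, rfl⟩ := mem_image.1 hmem'
            exact hmem j
        · intro a ha
          by_cases hai : blk a = i
          · have h1 : a ∈ A.filter (fun b => blk b = i) := mem_filter.2 ⟨ha, hai⟩
            have h2 : e ∈ A.filter (fun b => blk b = i) := mem_filter.2 ⟨hmemE, he⟩
            have h3 := Finset.card_le_one.1 (hfeas i) a h1 e h2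
            rw [h3]
            exact mem_insert_self e _
          · exact mem_insert_of_mem (hother a ha hai)
      · by_cases hempI : A.filter (fun a => blk a = i) = ∅
        · exfalso
          apply hnot
          apply Finset.mem_union_right
          rw [mem_image]
          refine ⟨r, mem_univ r, ?_⟩
          apply Finset.Subset.antisymm
          · intro a ha
            obtain ⟨j, _, rfl⟩ := mem_image.1 ha
            exact hmem j
          · intro a ha
            have hai : blk a ≠ i := by
              intro h
              have h4 : a ∈ A.filter (fun b => blk b = i) := mem_filter.2 ⟨ha, h⟩
              rw [hempI] at h4
              exact absurd h4 (Finset.notMem_empty a)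
            exact hother a ha hai
        · have h0 : slp blk i e A = 0 := by simp [slp, hmemE, hempI]
          rw [h0]
          ring
    · push_neg at hcov
      obtain ⟨j, hj⟩ := hcov
      have h0 : blockProb blk x A (j : N) = 0 := by
        rw [blockProb, if_pos hj, hx.2 (j : N)]; ring
      unfold pfac
      rw [Finset.prod_eq_zero (Finset.mem_erase.2 ⟨j.2, mem_univ _⟩) h0]
      ring
  have hfac1 : ∀ r : PSect blk i, pfac blk x i (insert e (pimg blk r)) = wp blk x r := by
    intro r
    unfold pfac
    rw [Finset.prod_subtype (univ.erase i) (p := fun j => j ≠ i) (by simp), wp]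
    exact Finset.prod_congr rfl fun j _ => blockProb_insert_pimg blk x he r j
  have hfac2 : ∀ r : PSect blk i, pfac blk x i (pimg blk r) = wp blk x r := by
    intro r
    unfold pfac
    rw [Finset.prod_subtype (univ.erase i) (p := fun j => j ≠ i) (by simp), wp]
    exact Finset.prod_congr rfl fun j _ => blockProb_pimg blk x r j
  rw [← Finset.sum_subset hsubset hzero, Finset.sum_union hdisj,
    Finset.sum_image hinj1, Finset.sum_image hinj2, ← Finset.sum_add_distrib]
  apply Finset.sum_congr rfl
  intro r _
  have h1 : slp blk i e (insert e (pimg blk r)) = 1 := by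
    simp [slp]
  have h2 : slp blk i e (pimg blk r) = -1 := by
    simp [slp, not_mem_pimg blk r he, pimg_filter_self blk r]
  rw [h1, h2, hfac1 r, hfac2 r]
  ring

/-- The marginal quantity `E_{S~x}[F(S_{-i}+a) - F(S_{-i})]` in partial-section form. -/
noncomputable def gmarg (F : Finset Ω → ℝ) (x : Ω → ℝ) (i : N) (a : {e : Ω // blk e = i}) : ℝ :=
  ∑ r : PSect blk i, wp blk x r * (F (insert (a : Ω) (pimg blk r)) - F (pimg blk r))

lemma marg {z : Ω → ℝ} (hz : memFace blk z) (i : N) (H : {e : Ω // blk e = i} → ℝ) :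
    ∑ u : Sect blk, wgt blk z u * H (u i) = ∑ a : {e : Ω // blk e = i}, z (a : Ω) * H a := by
  rw [sum_sect_split blk i]
  refine Finset.sum_congr rfl fun a _ => ?_
  have h1 : ∀ r : PSect blk i,
      wgt blk z ((spl blk i).symm (a, r)) * H (((spl blk i).symm (a, r)) i)
        = (z (a : Ω) * H a) * wp blk z r := by
    intro r
    rw [wgt_split blk z i a r, spl_symm_same blk i a r]
    ring
  refine Eq.trans (Finset.sum_congr rfl fun r _ => h1 r) ?_
  rw [← Finset.mul_sum, wp_sum_one blk hz i, mul_one]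

lemma gmarg_eq (F : Finset Ω → ℝ) {x : Ω → ℝ} (hx : memFace blk x) (i : N)
    (a : {e : Ω // blk e = i}) :
    ∑ s : Sect blk, wgt blk x s *
        (F (insert (a : Ω) ((simg blk s).erase (s i : Ω)))
          - F ((simg blk s).erase (s i : Ω)))
      = gmarg blk F x i a := by
  rw [sum_sect_split blk i]
  have h2 : ∀ b : {e : Ω // blk e = i},
      ∑ r : PSect blk i, wgt blk x ((spl blk i).symm (b, r)) *
        (F (insert (a : Ω) ((simg blk ((spl blk i).symm (b, r))).erase
            ((((spl blk i).symm (b, r)) i : Ω))))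
          - F ((simg blk ((spl blk i).symm (b, r))).erase ((((spl blk i).symm (b, r)) i : Ω))))
      = x (b : Ω) * gmarg blk F x i a := by
    intro b
    have h1 : ∀ r : PSect blk i, wgt blk x ((spl blk i).symm (b, r)) *
        (F (insert (a : Ω) ((simg blk ((spl blk i).symm (b, r))).erase
            ((((spl blk i).symm (b, r)) i : Ω))))
          - F ((simg blk ((spl blk i).symm (b, r))).erase ((((spl blk i).symm (b, r)) i : Ω))))
        = x (b : Ω) * (wp blk x r * (F (insert (a : Ω) (pimg blk r)) - F (pimg blk r))) := by
      intro r
      rw [erase_simg_split blk i b r, wgt_split blk x i b r]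
      ring
    refine Eq.trans (Finset.sum_congr rfl fun r _ => h1 r) ?_
    rw [← Finset.mul_sum]
    rfl
  refine Eq.trans (Finset.sum_congr rfl fun b _ => h2 b) ?_
  rw [← Finset.sum_mul, face_sum_subtype blk hx i, one_mul]

lemma diag_split (F : Finset Ω → ℝ) (x : Ω → ℝ) (i : N) :
    ∑ s : Sect blk, wgt blk x s * (F (simg blk s) - F ((simg blk s).erase (s i : Ω)))
      = ∑ a : {e : Ω // blk e = i}, x (a : Ω) * gmarg blk F x i a := by
  rw [sum_sect_split blk i]
  refine Finset.sum_congr rfl fun a _ => ?_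
  have h1 : ∀ r : PSect blk i, wgt blk x ((spl blk i).symm (a, r)) *
      (F (simg blk ((spl blk i).symm (a, r)))
        - F ((simg blk ((spl blk i).symm (a, r))).erase ((((spl blk i).symm (a, r)) i : Ω))))
      = x (a : Ω) * (wp blk x r * (F (insert (a : Ω) (pimg blk r)) - F (pimg blk r))) := by
    intro r
    rw [erase_simg_split blk i a r, wgt_split blk x i a r, simg_split blk i a r]
    ring
  refine Eq.trans (Finset.sum_congr rfl fun r _ => h1 r) ?_
  rw [← Finset.mul_sum]
  rfl

end Aux

section Submod

variable {Ω' : Type*} [Fintype Ω'] {F : Finset Ω' → ℝ}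

lemma submod_union_le (hsub : Submodular F) (hmono : ∀ A B : Finset Ω', A ⊆ B → F A ≤ F B)
    (B A : Finset Ω') :
    F (A ∪ B) - F A ≤ ∑ b ∈ B, (F (insert b A) - F A) := by
  induction B using Finset.induction_on with
  | empty => simp
  | @insert b B hb ih =>
    rw [Finset.sum_insert hb, Finset.union_insert]
    have hmono1 : F A ≤ F (insert b A) := hmono _ _ (Finset.subset_insert b A)
    by_cases hbAB : b ∈ A ∪ B
    · rw [Finset.insert_eq_self.2 hbAB]
      linarith
    · have h2 := hsub A (A ∪ B) Finset.subset_union_left b hbAB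
      linarith

lemma submod_erase_le (hsub : Submodular F) (A : Finset Ω') :
    ∑ a ∈ A, (F A - F (A.erase a)) ≤ F A - F ∅ := by
  induction A using Finset.induction_on with
  | empty => simp
  | @insert a B ha ih =>
    rw [Finset.sum_insert ha]
    have h1 : (insert a B).erase a = B := Finset.erase_insert ha
    have h2 : ∀ b ∈ B, F (insert a B) - F ((insert a B).erase b) ≤ F B - F (B.erase b) := by
      intro b hb
      have hba : a ≠ b := fun h => ha (by rw [h]; exact hb)
      have h3 : (insert a B).erase b = insert a (B.erase b) := Finset.erase_insert_of_ne hba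
      have h4 := hsub (B.erase b) B (Finset.erase_subset _ _) a ha
      rw [h3]
      linarith
    have h5 := Finset.sum_le_sum h2
    rw [h1]
    linarith

end Submod

section Key

set_option linter.unusedSectionVars false

variable {N Ω : Type*} [Fintype N] [Fintype Ω] (blk : Ω → N)

lemma key_ineq (F : Finset Ω → ℝ) (hnorm : F ∅ = 0)
    (hmono : ∀ A B : Finset Ω, A ⊆ B → F A ≤ F B) (hsub : Submodular F)
    (s t : Sect blk) :
    F (simg blk t) - 2 * F (simg blk s) ≤
      (∑ i : N, (F (insert (t i : Ω) ((simg blk s).erase (s i : Ω)))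
          - F ((simg blk s).erase (s i : Ω))))
        - ∑ i : N, (F (simg blk s) - F ((simg blk s).erase (s i : Ω))) := by
  have hKIa : ∀ i : N, F (insert (t i : Ω) (simg blk s)) - F (simg blk s)
      ≤ F (insert (t i : Ω) ((simg blk s).erase (s i : Ω)))
        - F ((simg blk s).erase (s i : Ω)) := by
    intro i
    by_cases hmem : (t i : Ω) ∈ simg blk s
    · rw [Finset.insert_eq_self.2 hmem]
      have h0 := hmono _ _ (Finset.subset_insert (t i : Ω) ((simg blk s).erase (s i : Ω)))
      linarith
    · exact hsub _ _ (Finset.erase_subset _ _) _ hmem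
  have he0 := Finset.sum_le_sum fun i (_ : i ∈ (univ : Finset N)) => hKIa i
  have hb := submod_union_le hsub hmono (simg blk t) (simg blk s)
  have hsum1 : ∑ b ∈ simg blk t, (F (insert b (simg blk s)) - F (simg blk s))
      = ∑ i : N, (F (insert (t i : Ω) (simg blk s)) - F (simg blk s)) := by
    rw [simg]
    exact Finset.sum_image fun i _ j _ h => by rw [← (t i).2, ← (t j).2, h]
  rw [hsum1] at hb
  have hc : F (simg blk t) ≤ F (simg blk s ∪ simg blk t) :=
    hmono _ _ Finset.subset_union_right
  have hd0 := submod_erase_le hsub (simg blk s)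
  have hsum2 : ∑ a ∈ simg blk s, (F (simg blk s) - F ((simg blk s).erase a))
      = ∑ i : N, (F (simg blk s) - F ((simg blk s).erase (s i : Ω))) := by
    rw [simg]
    exact Finset.sum_image fun i _ j _ h => by rw [← (s i).2, ← (s j).2, h]
  rw [hsum2, hnorm] at hd0
  linarith

end Key


/-- restricted DR first-order gap inequality on the categorical face:
for normalized, monotone, submodular `F` and all `x, y` in the categorical face,
`(1/2)·f̃(y) − f̃(x) ≤ (1/2)·⟨∇f̃(x), y − x⟩`. -/
theorem pme_dr_gap_on_face {N Ω : Type*} [Fintype N] [Fintype Ω]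
    (blk : Ω → N) (hblk : Function.Surjective blk)
    (F : Finset Ω → ℝ)
    (hnorm : F ∅ = 0)
    (hmono : ∀ A B : Finset Ω, A ⊆ B → F A ≤ F B)
    (hsub : Submodular F)
    (x y : Ω → ℝ) (hx : memFace blk x) (hy : memFace blk y) :
    (1 / 2) * pme blk F y - pme blk F x ≤
      (1 / 2) * ∑ e : Ω, pderiv (pme blk F) e x * (y e - x e) := by
  have hxw : ∀ s : Sect blk, 0 ≤ wgt blk x s :=
    fun s => Finset.prod_nonneg fun i _ => (hx.1 _).1
  have hyw : ∀ t : Sect blk, 0 ≤ wgt blk y t :=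
    fun t => Finset.prod_nonneg fun i _ => (hy.1 _).1
  have hD : ∑ e : Ω, pderiv (pme blk F) e x * (y e - x e)
      = ∑ i : N, ((∑ a : {e : Ω // blk e = i}, y (a : Ω) * gmarg blk F x i a)
          - ∑ a : {e : Ω // blk e = i}, x (a : Ω) * gmarg blk F x i a) := by
    rw [← Fintype.sum_fiberwise blk fun e => pderiv (pme blk F) e x * (y e - x e)]
    refine Finset.sum_congr rfl fun i _ => ?_
    rw [← Finset.sum_sub_distrib]
    refine Finset.sum_congr rfl fun a _ => ?_
    rw [pderiv_face blk F hx a.2]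
    rw [show (∑ r : PSect blk i, wp blk x r *
        (F (insert (a : Ω) (pimg blk r)) - F (pimg blk r))) = gmarg blk F x i a from rfl]
    ring
  have hper : ∀ i : N,
      (∑ a : {e : Ω // blk e = i}, y (a : Ω) * gmarg blk F x i a)
        - ∑ a : {e : Ω // blk e = i}, x (a : Ω) * gmarg blk F x i a
      = ∑ s : Sect blk, ∑ t : Sect blk, (wgt blk x s * wgt blk y t)
          * ((F (insert (t i : Ω) ((simg blk s).erase (s i : Ω)))
              - F ((simg blk s).erase (s i : Ω)))
            - (F (simg blk s) - F ((simg blk s).erase (s i : Ω)))) := by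
    intro i
    have hy1 : ∑ a : {e : Ω // blk e = i}, y (a : Ω) * gmarg blk F x i a
        = ∑ t : Sect blk, wgt blk y t * gmarg blk F x i (t i) :=
      (marg blk hy i _).symm
    have hx1 : ∑ a : {e : Ω // blk e = i}, x (a : Ω) * gmarg blk F x i a
        = ∑ s : Sect blk, wgt blk x s * (F (simg blk s) - F ((simg blk s).erase (s i : Ω))) :=
      (diag_split blk F x i).symm
    rw [hy1, hx1]
    have hy2 : ∑ t : Sect blk, wgt blk y t * gmarg blk F x i (t i)
        = ∑ s : Sect blk, ∑ t : Sect blk,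
            (wgt blk x s * wgt blk y t) *
              (F (insert (t i : Ω) ((simg blk s).erase (s i : Ω)))
                - F ((simg blk s).erase (s i : Ω))) := by
      have h3 : ∀ t : Sect blk, wgt blk y t * gmarg blk F x i (t i)
          = ∑ s : Sect blk, (wgt blk x s * wgt blk y t) *
              (F (insert (t i : Ω) ((simg blk s).erase (s i : Ω)))
                - F ((simg blk s).erase (s i : Ω))) := by
        intro t
        rw [← gmarg_eq blk F hx i (t i), Finset.mul_sum]
        exact Finset.sum_congr rfl fun s _ => by ring
      exact Eq.trans (Finset.sum_congr rfl fun t _ => h3 t) Finset.sum_comm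
    have hx2 : ∑ s : Sect blk, wgt blk x s
          * (F (simg blk s) - F ((simg blk s).erase (s i : Ω)))
        = ∑ s : Sect blk, ∑ t : Sect blk, (wgt blk x s * wgt blk y t) *
            (F (simg blk s) - F ((simg blk s).erase (s i : Ω))) := by
      refine Finset.sum_congr rfl fun s _ => ?_
      have h4 : ∀ t : Sect blk, (wgt blk x s * wgt blk y t)
            * (F (simg blk s) - F ((simg blk s).erase (s i : Ω)))
          = wgt blk y t * (wgt blk x s
              * (F (simg blk s) - F ((simg blk s).erase (s i : Ω)))) := fun t => by ring
      refine Eq.trans ?_ (Finset.sum_congr rfl fun t _ => (h4 t)).symm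
      rw [← Finset.sum_mul, wgt_sum_one blk hy, one_mul]
    rw [hy2, hx2, ← Finset.sum_sub_distrib]
    refine Finset.sum_congr rfl fun s _ => ?_
    rw [← Finset.sum_sub_distrib]
    exact Finset.sum_congr rfl fun t _ => by ring
  have hDtot : ∑ e : Ω, pderiv (pme blk F) e x * (y e - x e)
      = ∑ s : Sect blk, ∑ t : Sect blk, (wgt blk x s * wgt blk y t)
          * ∑ i : N, ((F (insert (t i : Ω) ((simg blk s).erase (s i : Ω)))
              - F ((simg blk s).erase (s i : Ω)))
            - (F (simg blk s) - F ((simg blk s).erase (s i : Ω)))) := by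
    rw [hD]
    refine Eq.trans (Finset.sum_congr rfl fun i _ => hper i) ?_
    refine Eq.trans Finset.sum_comm ?_
    refine Finset.sum_congr rfl fun s _ => ?_
    refine Eq.trans Finset.sum_comm ?_
    refine Finset.sum_congr rfl fun t _ => ?_
    rw [← Finset.mul_sum]
  have hpy : pme blk F y = ∑ s : Sect blk, ∑ t : Sect blk,
      (wgt blk x s * wgt blk y t) * F (simg blk t) := by
    rw [pme_face blk F hy]
    have h5 : ∀ s : Sect blk, ∑ t : Sect blk, (wgt blk x s * wgt blk y t) * F (simg blk t)
        = wgt blk x s * ∑ t : Sect blk, F (simg blk t) * wgt blk y t := by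
      intro s
      rw [Finset.mul_sum]
      exact Finset.sum_congr rfl fun t _ => by ring
    refine Eq.trans ?_ (Finset.sum_congr rfl fun s _ => (h5 s)).symm
    rw [← Finset.sum_mul, wgt_sum_one blk hx, one_mul]
  have hpx : pme blk F x = ∑ s : Sect blk, ∑ t : Sect blk,
      (wgt blk x s * wgt blk y t) * F (simg blk s) := by
    rw [pme_face blk F hx]
    refine Finset.sum_congr rfl fun s _ => ?_
    have h6 : ∑ t : Sect blk, (wgt blk x s * wgt blk y t) * F (simg blk s)
        = ∑ t : Sect blk, wgt blk y t * (wgt blk x s * F (simg blk s)) :=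
      Finset.sum_congr rfl fun t _ => by ring
    rw [h6, ← Finset.sum_mul, wgt_sum_one blk hy, one_mul]
    ring
  have hmain : pme blk F y - 2 * pme blk F x
      ≤ ∑ e : Ω, pderiv (pme blk F) e x * (y e - x e) := by
    rw [hpy, hpx, hDtot]
    have hrw : (∑ s : Sect blk, ∑ t : Sect blk, (wgt blk x s * wgt blk y t) * F (simg blk t))
        - 2 * ∑ s : Sect blk, ∑ t : Sect blk, (wgt blk x s * wgt blk y t) * F (simg blk s)
        = ∑ s : Sect blk, ∑ t : Sect blk, ((wgt blk x s * wgt blk y t) * F (simg blk t)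
            - 2 * ((wgt blk x s * wgt blk y t) * F (simg blk s))) := by
      rw [Finset.mul_sum, ← Finset.sum_sub_distrib]
      refine Finset.sum_congr rfl fun s _ => ?_
      rw [Finset.mul_sum, ← Finset.sum_sub_distrib]
    rw [hrw]
    refine Finset.sum_le_sum fun s _ => Finset.sum_le_sum fun t _ => ?_
    have hW : 0 ≤ wgt blk x s * wgt blk y t := mul_nonneg (hxw s) (hyw t)
    have hk := key_ineq blk F hnorm hmono hsub s t
    have hk2 : F (simg blk t) - 2 * F (simg blk s)
        ≤ ∑ i : N, ((F (insert (t i : Ω) ((simg blk s).erase (s i : Ω)))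
            - F ((simg blk s).erase (s i : Ω)))
          - (F (simg blk s) - F ((simg blk s).erase (s i : Ω)))) := by
      rw [Finset.sum_sub_distrib]
      exact hk
    calc (wgt blk x s * wgt blk y t) * F (simg blk t)
          - 2 * ((wgt blk x s * wgt blk y t) * F (simg blk s))
        = (wgt blk x s * wgt blk y t) * (F (simg blk t) - 2 * F (simg blk s)) := by ring
      _ ≤ (wgt blk x s * wgt blk y t)
            * ∑ i : N, ((F (insert (t i : Ω) ((simg blk s).erase (s i : Ω)))
                - F ((simg blk s).erase (s i : Ω)))
              - (F (simg blk s) - F ((simg blk s).erase (s i : Ω)))) :=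
          mul_le_mul_of_nonneg_left hk2 hW
  linarith
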